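/- Suppose F : M × (0,T] → ℝ is smooth, satisfies ∂F/∂t ≤ ΔF − F² + K², and H(x,t) = c/φ(x)² + 1/t + K where φ is a positive function with |∇φ| ≤ A and |∇²φ| ≤ A/r, with c = (12 + 4√n)A². Then H satisfies ∂H/∂t > ΔH − H² + K² at every point where φ > 0. -/
import Mathlib


private lemma barrier_arith (sn A r K u t L G : ℝ)
    (hsn : 1 ≤ sn) (hA : 0 < A) (hr : 0 < r) (hK : 0 ≤ K) (ht : 0 < t)
    (hu : 0 < u) (hAru : 1 ≤ A * r * u)
    (hL : -L ≤ sn * A / r) (hG : G ≤ A ^ 2) :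
    -(t ^ 2)⁻¹ >
      (12 + 4 * sn) * A ^ 2 * (-2 * u ^ 3 * L + 6 * u ^ 4 * G)
      - ((12 + 4 * sn) * A ^ 2 * u ^ 2 + 1 / t + K) ^ 2 + K ^ 2 := by
  have hLu : -L ≤ sn * A ^ 2 * u := by
    refine hL.trans ?_
    rw [div_le_iff₀ hr]
    nlinarith [mul_le_mul_of_nonneg_left hAru (by positivity : (0:ℝ) ≤ sn * A)]
  have hc : (0:ℝ) < (12 + 4 * sn) * A ^ 2 := by nlinarith
  have hcore : (12 + 4 * sn) * A ^ 2 * (-2 * u ^ 3 * L + 6 * u ^ 4 * G)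
      < ((12 + 4 * sn) * A ^ 2) ^ 2 * u ^ 4 := by
    have h1 : -2 * u ^ 3 * L ≤ 2 * sn * A ^ 2 * u ^ 4 := by
      nlinarith [pow_pos hu 3]
    have h2 : 6 * u ^ 4 * G ≤ 6 * A ^ 2 * u ^ 4 := by
      nlinarith [pow_pos hu 4]
    have h3 : -2 * u ^ 3 * L + 6 * u ^ 4 * G < (12 + 4 * sn) * A ^ 2 * u ^ 4 := by
      nlinarith [pow_pos hu 4, pow_pos hA 2]
    nlinarith [mul_lt_mul_of_pos_left h3 hc]
  have hT : 0 < 1 / t := by positivity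
  have hsq : ((12 + 4 * sn) * A ^ 2) ^ 2 * u ^ 4 + (1 / t) ^ 2 + K ^ 2
      ≤ ((12 + 4 * sn) * A ^ 2 * u ^ 2 + 1 / t + K) ^ 2 := by
    nlinarith [mul_pos (mul_pos hc (pow_pos hu 2)) hT,
      mul_nonneg (mul_nonneg hc.le (pow_pos hu 2).le) hK,
      mul_nonneg hT.le hK]
  have hteq : -(t ^ 2)⁻¹ = -(1 / t) ^ 2 := by field_simp
  linarith

/-- barrier (strict supersolution) inequality for
`H(x,t) = c φ(x)⁻² + t⁻¹ + K` with `c = (12 + 4√n)A²`, where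
`φ : M → (0, Ar]` is a cutoff with `|∇φ| ≤ A`, `|∇²φ| ≤ A/r` and
`r ≤ 1/√K`.  The Riemannian structure is abstracted: `lap` is the
Laplace–Beltrami operator, `gradφSq = |∇φ|²`; the chain rule
`Δ(cφ⁻²) = c(-2φ⁻³ Δφ + 6φ⁻⁴ |∇φ|²)` and the bound `|Δφ| ≤ √n A/r`
(from `|∇²φ| ≤ A/r`) are hypotheses.  Conclusion:
`∂H/∂t > ΔH - H² + K²` wherever `φ > 0` and `t > 0`. -/
theorem barrier_supersolution
    (M : Type*) (n : ℕ) (lap : (M → ℝ) → M → ℝ)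
    (φ gradφSq lapφ : M → ℝ) (A r K : ℝ) (x : M) (t : ℝ)
    (hn : 1 ≤ n) (hA : 0 < A) (hr : 0 < r) (hK : 0 ≤ K) (ht : 0 < t)
    (hrK : r ≤ 1 / Real.sqrt K)
    (hφpos : 0 < φ x) (hφub : φ x ≤ A * r)
    (hgradφ : gradφSq x ≤ A ^ 2)
    (hlapφ : |lapφ x| ≤ Real.sqrt n * A / r)
    (chainRule : ∀ s : ℝ,
      lap (fun y => (12 + 4 * Real.sqrt n) * A ^ 2 * (φ y) ^ (-2 : ℤ)
            + 1 / s + K) x =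
        (12 + 4 * Real.sqrt n) * A ^ 2 *
          (-2 * (φ x) ^ (-3 : ℤ) * lapφ x + 6 * (φ x) ^ (-4 : ℤ) * gradφSq x)) :
    deriv (fun s => (12 + 4 * Real.sqrt n) * A ^ 2 * (φ x) ^ (-2 : ℤ)
        + 1 / s + K) t >
      lap (fun y => (12 + 4 * Real.sqrt n) * A ^ 2 * (φ y) ^ (-2 : ℤ)
        + 1 / t + K) x
      - ((12 + 4 * Real.sqrt n) * A ^ 2 * (φ x) ^ (-2 : ℤ) + 1 / t + K) ^ 2
      + K ^ 2 := by
  have hsn : (1:ℝ) ≤ Real.sqrt n := by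
    rw [show (1:ℝ) = Real.sqrt 1 by simp]
    exact Real.sqrt_le_sqrt (by exact_mod_cast hn)
  have hd : HasDerivAt (fun s : ℝ =>
      (12 + 4 * Real.sqrt n) * A ^ 2 * (φ x) ^ (-2 : ℤ) + 1 / s + K)
      (-(t ^ 2)⁻¹) t := by
    have h := ((hasDerivAt_inv (ne_of_gt ht)).const_add
      ((12 + 4 * Real.sqrt n) * A ^ 2 * (φ x) ^ (-2 : ℤ))).add_const K
    simpa [one_div] using h
  rw [hd.deriv, chainRule t]
  have hupos : 0 < (φ x)⁻¹ := inv_pos.mpr hφpos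
  have e2 : (φ x) ^ (-2 : ℤ) = (φ x)⁻¹ ^ 2 := by
    rw [inv_pow, ← zpow_natCast (φ x) 2, ← zpow_neg]; norm_num
  have e3 : (φ x) ^ (-3 : ℤ) = (φ x)⁻¹ ^ 3 := by
    rw [inv_pow, ← zpow_natCast (φ x) 3, ← zpow_neg]; norm_num
  have e4 : (φ x) ^ (-4 : ℤ) = (φ x)⁻¹ ^ 4 := by
    rw [inv_pow, ← zpow_natCast (φ x) 4, ← zpow_neg]; norm_num
  rw [e2, e3, e4]
  have hAru : 1 ≤ A * r * (φ x)⁻¹ := by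
    have := (one_le_div hφpos).mpr hφub
    simpa [div_eq_mul_inv] using this
  have hL : -lapφ x ≤ Real.sqrt n * A / r := by
    have := (abs_le.mp hlapφ).1; linarith
  exact barrier_arith (Real.sqrt n) A r K (φ x)⁻¹ t (lapφ x) (gradφSq x)
    hsn hA hr hK ht hupos hAru hL hgradφ
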